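/- Let a = x_0 < x_1 < ⋯ < x_n = b and let y_0,…,y_n be real values. There exists a unique function S : [a,b] → ℝ such that: S restricted to each [x_i, x_{i+1}] is a polynomial of degree at most 3; S(x_i) = y_i for all i; S is twice continuously differentiable on [a,b]; and S''(x_0) = S''(x_n) = 0 (natural boundary conditions). -/

import Mathlib

open Set Polynomial

/-- `S` is a natural cubic spline on the partition `x 0 < x 1 < ⋯ < x n` interpolating the
values `y i`: on each subinterval `[x i, x (i+1)]` it coincides with a polynomial of degree
at most 3, it takes the value `y i` at each node `x i`, it is twice continuously
differentiable on `[x 0, x n]`, and its second derivative vanishes at both endpoints. -/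
def IsNaturalCubicSpline (n : ℕ) (x : Fin (n + 1) → ℝ) (y : Fin (n + 1) → ℝ)
    (S : ℝ → ℝ) : Prop :=
  (∀ i : Fin n, ∃ p : Polynomial ℝ, p.degree ≤ 3 ∧
      ∀ t ∈ Set.Icc (x i.castSucc) (x i.succ), S t = p.eval t) ∧
  (∀ i, S (x i) = y i) ∧
  ContDiffOn ℝ 2 S (Set.Icc (x 0) (x (Fin.last n))) ∧
  iteratedDerivWithin 2 S (Set.Icc (x 0) (x (Fin.last n))) (x 0) = 0 ∧
  iteratedDerivWithin 2 S (Set.Icc (x 0) (x (Fin.last n))) (x (Fin.last n)) = 0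

open Filter

set_option maxHeartbeats 1000000

section ReluLemmas

noncomputable def relu (t : ℝ) : ℝ := max t 0

lemma relu_nonneg (t : ℝ) : 0 ≤ relu t := le_max_right _ _
lemma relu_abs_le (t : ℝ) : relu t ≤ |t| := max_le (le_abs_self t) (abs_nonneg t)
lemma relu_of_nonneg {t : ℝ} (h : 0 ≤ t) : relu t = t := max_eq_left h
lemma relu_of_nonpos {t : ℝ} (h : t ≤ 0) : relu t = 0 := max_eq_right h
lemma continuous_relu : Continuous relu := continuous_id.max continuous_const

lemma hasDerivAt_relu_pow (m : ℕ) (hm : 1 ≤ m) (u : ℝ) :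
    HasDerivAt (fun t => relu t ^ (m + 1)) ((m + 1) * relu u ^ m) u := by
  rcases lt_trichotomy u 0 with hu | hu | hu
  · have h0 : (fun t : ℝ => relu t ^ (m + 1)) =ᶠ[nhds u] fun _ => (0:ℝ) := by
      filter_upwards [eventually_lt_nhds hu] with t ht
      simp [relu_of_nonpos ht.le]
    rw [h0.hasDerivAt_iff]
    have : ((m:ℝ) + 1) * relu u ^ m = 0 := by
      simp [relu_of_nonpos hu.le, zero_pow (by omega : m ≠ 0)]
    rw [this]
    exact hasDerivAt_const u 0
  · subst hu
    have h1 : ((m:ℝ) + 1) * relu 0 ^ m = 0 := by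
      simp [relu, zero_pow (by omega : m ≠ 0)]
    rw [h1, hasDerivAt_iff_tendsto_slope]
    apply squeeze_zero_norm' (a := fun t : ℝ => |t| ^ m)
    · filter_upwards [self_mem_nhdsWithin] with t (ht : t ≠ 0)
      have hs : slope (fun t => relu t ^ (m + 1)) 0 t = relu t ^ (m+1) / t := by
        simp [slope, relu, zero_pow (Nat.succ_ne_zero m), div_eq_inv_mul]
      rw [hs]
      have : ‖relu t ^ (m + 1) / t‖ = relu t ^ (m+1) / |t| := by
        rw [Real.norm_eq_abs, abs_div, abs_of_nonneg (pow_nonneg (relu_nonneg t) _)]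
      rw [this]
      calc relu t ^ (m+1) / |t| ≤ |t| ^ (m+1) / |t| := by
            gcongr <;> first | exact relu_abs_le t | exact relu_nonneg t | positivity
        _ = |t| ^ m := by
            rw [pow_succ, mul_div_assoc, div_self (abs_ne_zero.mpr ht), mul_one]
    · have : Tendsto (fun t : ℝ => |t| ^ m) (nhds 0) (nhds 0) := by
        have := ((continuous_abs.tendsto (0:ℝ)).pow m)
        simpa [zero_pow (by omega : m ≠ 0)] using this
      exact this.mono_left nhdsWithin_le_nhds
  · have h0 : (fun t : ℝ => relu t ^ (m + 1)) =ᶠ[nhds u] fun t => t ^ (m + 1) := by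
      filter_upwards [eventually_gt_nhds hu] with t ht
      simp [relu_of_nonneg ht.le]
    rw [h0.hasDerivAt_iff, relu_of_nonneg hu.le]
    simpa using hasDerivAt_pow (m+1) u

lemma contDiff_relu_cube : ContDiff ℝ 2 (fun t => relu t ^ 3) := by
  have hd3 : ∀ u, HasDerivAt (fun t => relu t ^ 3) (3 * relu u ^ 2) u := by
    intro u
    have h := hasDerivAt_relu_pow 2 (by norm_num) u
    norm_num at h
    exact h
  have hd2 : ∀ u, HasDerivAt (fun t => 3 * relu t ^ 2) (3 * (2 * relu u)) u := by
    intro u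
    have h := (hasDerivAt_relu_pow 1 le_rfl u).const_mul 3
    norm_num at h
    convert h using 1
  have e3 : deriv (fun t => relu t ^ 3) = fun u => 3 * relu u ^ 2 :=
    funext fun u => (hd3 u).deriv
  have : (2 : WithTop ℕ∞) = 1 + 1 := by norm_num
  rw [this, contDiff_succ_iff_deriv]
  refine ⟨fun u => (hd3 u).differentiableAt, by simp, ?_⟩
  rw [e3]
  have : (1 : WithTop ℕ∞) = 0 + 1 := by norm_num
  rw [this, contDiff_succ_iff_deriv]
  refine ⟨fun u => (hd2 u).differentiableAt, by simp, ?_⟩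
  have e2 : deriv (fun t => 3 * relu t ^ 2) = fun u => 3 * (2 * relu u) :=
    funext fun u => (hd2 u).deriv
  rw [e2, contDiff_zero]
  exact (continuous_const.mul (continuous_const.mul continuous_relu))

end ReluLemmas

section SplineCalculus

lemma derivWithin_eq_of_eqOn {f g : ℝ → ℝ} {D s : Set ℝ} {t d : ℝ}
    (hf : DifferentiableWithinAt ℝ f D t) (hs : s ⊆ D) (ht : t ∈ s)
    (hcong : Set.EqOn f g s) (hg : HasDerivWithinAt g d s t)
    (hu : UniqueDiffWithinAt ℝ s t) : derivWithin f D t = d := by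
  have h1 : HasDerivWithinAt g (derivWithin f D t) s t :=
    (hf.hasDerivWithinAt.mono hs).congr (fun u hu' => (hcong hu').symm) (hcong ht).symm
  rw [← h1.derivWithin hu, hg.derivWithin hu]

lemma last_pos {n : ℕ} (hn : 0 < n) : (0 : Fin (n+1)) < Fin.last n := by
  rw [Fin.lt_def]
  simpa using hn

lemma sub_Icc {n : ℕ} (x : Fin (n + 1) → ℝ) (hx : StrictMono x) (i : Fin n) :
    Set.Icc (x i.castSucc) (x i.succ) ⊆ Set.Icc (x 0) (x (Fin.last n)) :=
  Set.Icc_subset_Icc (hx.monotone (Fin.zero_le _)) (hx.monotone (Fin.le_last _))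

lemma spline_derivs (n : ℕ) (hn : 0 < n) (x : Fin (n + 1) → ℝ) (hx : StrictMono x)
    (S : ℝ → ℝ) (hS : ContDiffOn ℝ 2 S (Set.Icc (x 0) (x (Fin.last n))))
    (p : Fin n → Polynomial ℝ)
    (hp : ∀ i : Fin n, ∀ t ∈ Set.Icc (x i.castSucc) (x i.succ), S t = (p i).eval t) :
    (∀ i : Fin n, ∀ t ∈ Set.Icc (x i.castSucc) (x i.succ),
      derivWithin S (Set.Icc (x 0) (x (Fin.last n))) t = ((p i).derivative).eval t) ∧
    (∀ i : Fin n, ∀ t ∈ Set.Icc (x i.castSucc) (x i.succ),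
      iteratedDerivWithin 2 S (Set.Icc (x 0) (x (Fin.last n))) t
        = ((p i).derivative.derivative).eval t) := by
  set D := Set.Icc (x 0) (x (Fin.last n)) with hD
  have hab : x 0 < x (Fin.last n) := hx (last_pos hn)
  have hUD : UniqueDiffOn ℝ D := uniqueDiffOn_Icc hab
  have hUs : ∀ i : Fin n, UniqueDiffOn ℝ (Set.Icc (x i.castSucc) (x i.succ)) :=
    fun i => uniqueDiffOn_Icc (hx (Fin.castSucc_lt_succ (i := i)))
  have hSd : DifferentiableOn ℝ S D := hS.differentiableOn (by norm_num)
  have h1 : ∀ i : Fin n, ∀ t ∈ Set.Icc (x i.castSucc) (x i.succ),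
      derivWithin S D t = ((p i).derivative).eval t := by
    intro i t ht
    exact derivWithin_eq_of_eqOn (hSd t (sub_Icc x hx i ht)) (sub_Icc x hx i) ht
      (fun u hu => hp i u hu)
      (((p i).hasDerivAt t).hasDerivWithinAt) (hUs i t ht)
  refine ⟨h1, ?_⟩
  have hg : ContDiffOn ℝ 1 (derivWithin S D) D := hS.derivWithin hUD (by norm_num)
  have hgd : DifferentiableOn ℝ (derivWithin S D) D := hg.differentiableOn (by norm_num)
  intro i t ht
  have hmem : t ∈ D := sub_Icc x hx i ht
  have h2 : iteratedDerivWithin 2 S D t = derivWithin (derivWithin S D) D t := by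
    rw [show (2:ℕ) = 1 + 1 from rfl, iteratedDerivWithin_succ]
    apply derivWithin_congr
    · intro u hu
      exact congrFun iteratedDerivWithin_one u
    · exact congrFun iteratedDerivWithin_one t
  rw [h2]
  exact derivWithin_eq_of_eqOn (hgd t hmem) (sub_Icc x hx i) ht
    (fun u hu => h1 i u hu)
    (((p i).derivative.hasDerivAt t).hasDerivWithinAt) (hUs i t ht)

lemma cover_lemma (n : ℕ) (hn : 0 < n) (x : Fin (n + 1) → ℝ) (hx : StrictMono x)
    {t : ℝ} (ht : t ∈ Set.Icc (x 0) (x (Fin.last n))) :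
    ∃ i : Fin n, t ∈ Set.Icc (x i.castSucc) (x i.succ) := by
  classical
  set s : Finset (Fin (n+1)) := Finset.univ.filter (fun j => x j ≤ t) with hs
  have h0 : (0 : Fin (n+1)) ∈ s := by simp [hs, ht.1]
  have hne : s.Nonempty := ⟨0, h0⟩
  set j := s.max' hne with hj
  have hjs : j ∈ s := s.max'_mem hne
  have hxj : x j ≤ t := by simpa [hs] using hjs
  by_cases hlt : (j : ℕ) < n
  · refine ⟨⟨j, hlt⟩, hxj, ?_⟩
    by_contra hcon
    push_neg at hcon
    have hmem : (⟨j, hlt⟩ : Fin n).succ ∈ s := by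
      simp [hs]
      exact hcon.le
    have := s.le_max' _ hmem
    rw [← hj] at this
    have : ((⟨j, hlt⟩ : Fin n).succ : ℕ) ≤ (j : ℕ) := this
    simp at this
  · have hjl : j = Fin.last n := by
      apply Fin.ext
      simp only [Fin.val_last]
      omega
    have hteq : t = x (Fin.last n) := le_antisymm ht.2 (hjl ▸ hxj)
    refine ⟨⟨n - 1, by omega⟩, ?_, ?_⟩
    · refine le_trans ?_ hteq.ge
      exact hx.monotone (Fin.le_last _)
    · refine le_trans hteq.le ?_
      apply le_of_eq
      congr 1
      apply Fin.ext
      simp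
      omega

lemma cubic_third_deriv {p : Polynomial ℝ} (hdeg : p.degree ≤ 3) :
    p.derivative.derivative.derivative
      = Polynomial.C (p.derivative.derivative.derivative.coeff 0) := by
  apply Polynomial.eq_C_of_natDegree_le_zero
  have h1 : p.natDegree ≤ 3 := Polynomial.natDegree_le_iff_degree_le.mpr hdeg
  have h2 := Polynomial.natDegree_derivative_le p
  have h3 := Polynomial.natDegree_derivative_le p.derivative
  have h4 := Polynomial.natDegree_derivative_le p.derivative.derivative
  omega

lemma homog (n : ℕ) (hn : 0 < n) (x : Fin (n + 1) → ℝ) (hx : StrictMono x)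
    (S : ℝ → ℝ) (hS : ContDiffOn ℝ 2 S (Set.Icc (x 0) (x (Fin.last n))))
    (p : Fin n → Polynomial ℝ) (hdeg : ∀ i, (p i).degree ≤ 3)
    (hp : ∀ i : Fin n, ∀ t ∈ Set.Icc (x i.castSucc) (x i.succ), S t = (p i).eval t)
    (hz : ∀ j, S (x j) = 0)
    (h0 : ((p ⟨0, hn⟩).derivative.derivative).eval (x 0) = 0)
    (hN : ((p ⟨n - 1, by omega⟩).derivative.derivative).eval (x (Fin.last n)) = 0) :
    ∀ t ∈ Set.Icc (x 0) (x (Fin.last n)), S t = 0 := by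
  classical
  set D := Set.Icc (x 0) (x (Fin.last n)) with hD
  obtain ⟨G, H⟩ := spline_derivs n hn x hx S hS p hp
  set g := derivWithin S D with hg
  set h := iteratedDerivWithin 2 S D with hh
  have hmemL : ∀ i : Fin n, x i.castSucc ∈ Set.Icc (x i.castSucc) (x i.succ) :=
    fun i => ⟨le_refl _, (hx (Fin.castSucc_lt_succ (i := i))).le⟩
  have hmemR : ∀ i : Fin n, x i.succ ∈ Set.Icc (x i.castSucc) (x i.succ) :=
    fun i => ⟨(hx (Fin.castSucc_lt_succ (i := i))).le, le_refl _⟩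
  set c : Fin n → ℝ := fun i => ((p i).derivative.derivative.derivative).coeff 0 with hc
  set q : Fin n → Polynomial ℝ := fun i =>
    (p i).derivative * (p i).derivative.derivative - Polynomial.C (c i) * p i with hq
  have hq' : ∀ i, (q i).derivative = ((p i).derivative.derivative) ^ 2 := by
    intro i
    have h3 := cubic_third_deriv (hdeg i)
    simp only [hq, Polynomial.derivative_sub, Polynomial.derivative_mul,
      Polynomial.derivative_C, ← hc]
    rw [← h3]
    ring
  have hqmono : ∀ i, Monotone (fun t => (q i).eval t) := by
    intro i
    apply monotone_of_deriv_nonneg (Polynomial.differentiable _)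
    intro t
    rw [Polynomial.deriv, hq' i]
    simp [sq_nonneg]
  have hqval : ∀ i : Fin n, ∀ j : Fin (n+1), ∀ ht : x j ∈ Set.Icc (x i.castSucc) (x i.succ),
      (q i).eval (x j) = g (x j) * h (x j) := by
    intro i j ht
    have hpj : (p i).eval (x j) = 0 := by rw [← hp i _ ht, hz j]
    simp only [hq, Polynomial.eval_sub, Polynomial.eval_mul, Polynomial.eval_C, hpj, mul_zero,
      sub_zero]
    rw [G i _ ht, H i _ ht]
  set u : Fin (n+1) → ℝ := fun j => g (x j) * h (x j) with hu
  set v : ℕ → ℝ := fun k => if hk : k < n + 1 then u ⟨k, hk⟩ else 0 with hv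
  have hvsum : ∑ k ∈ Finset.range n, (v (k+1) - v k) = v n - v 0 := Finset.sum_range_sub v n
  set d : Fin n → ℝ := fun i => (q i).eval (x i.succ) - (q i).eval (x i.castSucc) with hd
  have hdv : ∀ k (hk : k < n), d ⟨k, hk⟩ = v (k+1) - v k := by
    intro k hk
    have e1 : (⟨k, hk⟩ : Fin n).succ = (⟨k+1, by omega⟩ : Fin (n+1)) := by
      apply Fin.ext; simp
    have e2 : (⟨k, hk⟩ : Fin n).castSucc = (⟨k, by omega⟩ : Fin (n+1)) := by
      apply Fin.ext; simp
    rw [hd]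
    simp only [hv, dif_pos (show k + 1 < n + 1 by omega), dif_pos (show k < n + 1 by omega)]
    rw [hqval _ _ (hmemR _), hqval _ _ (hmemL _), hu]
    rw [e1, e2]
  have hv0 : v 0 = 0 := by
    have : h (x 0) = 0 := by
      have := H ⟨0, hn⟩ (x (⟨0, hn⟩ : Fin n).castSucc) (hmemL _)
      have e : (⟨0, hn⟩ : Fin n).castSucc = (0 : Fin (n+1)) := by
        apply Fin.ext; simp
      rw [e] at this
      rw [this, h0]
    simp [hv, hu, this]
  have hvn : v n = 0 := by
    have elast : (⟨n-1, by omega⟩ : Fin n).succ = Fin.last n := by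
      apply Fin.ext; simp; omega
    have : h (x (Fin.last n)) = 0 := by
      have := H ⟨n-1, by omega⟩ (x (⟨n-1, by omega⟩ : Fin n).succ) (hmemR _)
      rw [elast] at this
      rw [this, hN]
    have e : (⟨n, by omega⟩ : Fin (n+1)) = Fin.last n := by
      apply Fin.ext; simp
    simp only [hv, dif_pos (show n < n + 1 by omega), hu, e, this, mul_zero]
  have hsum : ∑ i : Fin n, d i = 0 := by
    calc ∑ i : Fin n, d i = ∑ i : Fin n, (v (i.val + 1) - v i.val) := by
          apply Finset.sum_congr rfl
          intro i _
          rw [← hdv i.val i.isLt]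
      _ = ∑ k ∈ Finset.range n, (v (k + 1) - v k) :=
          Fin.sum_univ_eq_sum_range (fun k => v (k + 1) - v k) n
      _ = 0 := by rw [hvsum, hv0, hvn]; ring
  have hdnonneg : ∀ i : Fin n, 0 ≤ d i := by
    intro i
    exact sub_nonneg.mpr (hqmono i (hx (Fin.castSucc_lt_succ (i := i))).le)
  have hdzero : ∀ i : Fin n, d i = 0 := by
    intro i
    have := (Finset.sum_eq_zero_iff_of_nonneg (fun j _ => hdnonneg j)).mp hsum
    exact this i (Finset.mem_univ i)
  have hpzero : ∀ i : Fin n, p i = 0 := by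
    intro i
    set a := x i.castSucc
    set b := x i.succ
    have hab : a < b := hx (Fin.castSucc_lt_succ (i := i))
    have hqconst : ∀ t ∈ Set.Icc a b, (q i).eval t = (q i).eval a := by
      intro t htt
      refine le_antisymm ?_ (hqmono i htt.1)
      have : (q i).eval t ≤ (q i).eval b := hqmono i htt.2
      have heq : (q i).eval b = (q i).eval a := by
        have h' := hdzero i
        simp only [hd] at h'
        linarith
      linarith
    have hroot : ∀ t ∈ Set.Ioo a b, ((p i).derivative.derivative).eval t = 0 := by
      intro t htt
      have hev : (fun s => (q i).eval s) =ᶠ[nhds t] fun _ => (q i).eval a := by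
        filter_upwards [Ioo_mem_nhds htt.1 htt.2] with s hs
        exact hqconst s (Set.Ioo_subset_Icc_self hs)
      have hder : deriv (fun s => (q i).eval s) t = 0 := by
        rw [Filter.EventuallyEq.deriv_eq hev]
        simp
      rw [Polynomial.deriv, hq' i] at hder
      simpa [sq_eq_zero_iff] using hder
    have hpp : (p i).derivative.derivative = 0 := by
      apply Polynomial.eq_zero_of_infinite_isRoot
      apply Set.Infinite.mono (s := Set.Ioo a b)
      · intro t htt
        exact hroot t htt
      · exact Set.infinite_coe_iff.mp (Set.Ioo.infinite hab)
    have hp' : (p i).derivative = Polynomial.C ((p i).derivative.coeff 0) :=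
      Polynomial.eq_C_of_derivative_eq_zero hpp
    set k := (p i).derivative.coeff 0 with hk
    have hpa : (p i).eval a = 0 := by rw [← hp i a (hmemL i), hz]
    have hpb : (p i).eval b = 0 := by rw [← hp i b (hmemR i), hz]
    set r := p i - Polynomial.C ((p i).eval a) - Polynomial.C k * (Polynomial.X - Polynomial.C a)
      with hr
    have hrd : r.derivative = 0 := by
      simp only [hr, Polynomial.derivative_sub, Polynomial.derivative_C,
        Polynomial.derivative_mul, Polynomial.derivative_X, sub_zero, zero_mul, mul_one, zero_add]
      rw [hp']
      ring
    have hrC : r = Polynomial.C (r.coeff 0) := Polynomial.eq_C_of_derivative_eq_zero hrd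
    have hra : r.eval a = 0 := by simp [hr, hpa]
    have hr0 : r = 0 := by
      rw [hrC] at hra ⊢
      simp at hra
      rw [hra]
      simp
    have hpeq : p i = Polynomial.C ((p i).eval a)
        + Polynomial.C k * (Polynomial.X - Polynomial.C a) := by
      have h' := hr0
      rw [hr] at h'
      linear_combination h'
    have hk0 : k = 0 := by
      have := hpb
      rw [hpeq] at this
      simp [hpa] at this
      rcases this with h | h
      · exact h
      · exact absurd (sub_eq_zero.mp h) hab.ne'
    rw [hpeq, hk0, hpa]
    simp
  intro t ht
  obtain ⟨i, hti⟩ := cover_lemma n hn x hx ht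
  rw [hp i t hti, hpzero i]
  simp

end SplineCalculus

section Construction

variable {n : ℕ} (x : Fin (n + 1) → ℝ)

noncomputable def Sfun (v : ℝ × ℝ × (Fin n → ℝ)) (t : ℝ) : ℝ :=
  v.1 + v.2.1 * t + ∑ i : Fin n, v.2.2 i * relu (t - x i.castSucc) ^ 3

noncomputable def Ppoly (v : ℝ × ℝ × (Fin n → ℝ)) (j : Fin n) : Polynomial ℝ :=
  Polynomial.C v.1 + Polynomial.C v.2.1 * Polynomial.X +
    ∑ i : Fin n, if i ≤ j then
      Polynomial.C (v.2.2 i) * (Polynomial.X - Polynomial.C (x i.castSucc)) ^ 3 else 0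

lemma Sfun_contDiff (v : ℝ × ℝ × (Fin n → ℝ)) : ContDiff ℝ 2 (Sfun x v) := by
  apply ContDiff.add
  · exact (contDiff_const.add (contDiff_const.mul contDiff_id))
  · apply ContDiff.sum
    intro i _
    exact ContDiff.mul contDiff_const
      (contDiff_relu_cube.comp (contDiff_id.sub contDiff_const))

lemma Ppoly_degree (v : ℝ × ℝ × (Fin n → ℝ)) (j : Fin n) : (Ppoly x v j).degree ≤ 3 := by
  apply Polynomial.degree_add_le _ _ |>.trans
  apply max_le
  · apply Polynomial.degree_add_le _ _ |>.trans
    apply max_le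
    · exact Polynomial.degree_C_le.trans (by norm_num)
    · apply (Polynomial.degree_mul_le _ _).trans
      calc (Polynomial.C v.2.1).degree + Polynomial.X.degree ≤ 0 + 1 :=
            add_le_add Polynomial.degree_C_le Polynomial.degree_X_le
        _ ≤ 3 := by norm_num
  · apply (Polynomial.degree_sum_le _ _).trans
    apply Finset.sup_le
    intro i _
    by_cases hi : i ≤ j
    · rw [if_pos hi]
      apply (Polynomial.degree_mul_le _ _).trans
      calc (Polynomial.C (v.2.2 i)).degree
            + ((Polynomial.X - Polynomial.C (x i.castSucc)) ^ 3).degree ≤ 0 + 3 := by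
            apply add_le_add Polynomial.degree_C_le
            apply (Polynomial.degree_pow_le _ _).trans
            rw [Polynomial.degree_X_sub_C]
            norm_num
        _ ≤ 3 := by norm_num
    · rw [if_neg hi]
      simp

lemma Sfun_eq_Ppoly (hx : StrictMono x) (v : ℝ × ℝ × (Fin n → ℝ)) (j : Fin n) :
    ∀ t ∈ Set.Icc (x j.castSucc) (x j.succ), Sfun x v t = (Ppoly x v j).eval t := by
  intro t ht
  rw [Sfun, Ppoly]
  simp only [Polynomial.eval_add, Polynomial.eval_mul, Polynomial.eval_C, Polynomial.eval_X,
    Polynomial.eval_finset_sum]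
  congr 1
  apply Finset.sum_congr rfl
  intro i _
  by_cases hi : i ≤ j
  · rw [if_pos hi]
    have hle : x i.castSucc ≤ t := le_trans (hx.monotone (by
      simpa [Fin.castSucc_le_castSucc_iff] using hi)) ht.1
    rw [relu_of_nonneg (sub_nonneg.mpr hle)]
    simp
  · rw [if_neg hi]
    have hji : j.succ ≤ i.castSucc := by
      rw [Fin.le_def]
      simp only [Fin.val_succ, Fin.coe_castSucc]
      have : (j : ℕ) < i := by
        rcases lt_or_ge (j:ℕ) i with h | h
        · exact h
        · exact absurd (by rw [Fin.le_def]; exact h) hi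
      omega
    have hge : t ≤ x i.castSucc := le_trans ht.2 (hx.monotone hji)
    rw [relu_of_nonpos (sub_nonpos.mpr hge)]
    simp

lemma Ppoly_dd_eval (v : ℝ × ℝ × (Fin n → ℝ)) (j : Fin n) (t : ℝ) :
    ((Ppoly x v j).derivative.derivative).eval t
      = ∑ i : Fin n, if i ≤ j then 6 * v.2.2 i * (t - x i.castSucc) else 0 := by
  rw [Ppoly]
  rw [Polynomial.derivative_add, Polynomial.derivative_add, Polynomial.derivative_sum]
  rw [Polynomial.derivative_add, Polynomial.derivative_add, Polynomial.derivative_sum]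
  simp only [Polynomial.derivative_C, Polynomial.derivative_C_mul, Polynomial.derivative_X]
  simp only [Polynomial.eval_add, Polynomial.eval_finset_sum]
  have key : ∀ i : Fin n,
      (Polynomial.derivative (Polynomial.derivative
        (if i ≤ j then Polynomial.C (v.2.2 i)
          * (Polynomial.X - Polynomial.C (x i.castSucc)) ^ 3 else 0))).eval t
      = if i ≤ j then 6 * v.2.2 i * (t - x i.castSucc) else 0 := by
    intro i
    by_cases hi : i ≤ j
    · rw [if_pos hi, if_pos hi]
      rw [Polynomial.derivative_C_mul, Polynomial.derivative_pow, Polynomial.derivative_X_sub_C]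
      simp only [mul_one, Polynomial.derivative_C_mul, Polynomial.derivative_mul]
      simp [Polynomial.derivative_pow, Polynomial.derivative_X_sub_C]
      ring
    · rw [if_neg hi, if_neg hi]
      simp
  calc _ = ∑ i : Fin n, (Polynomial.derivative (Polynomial.derivative
        (if i ≤ j then Polynomial.C (v.2.2 i)
          * (Polynomial.X - Polynomial.C (x i.castSucc)) ^ 3 else 0))).eval t := by
        simp
    _ = _ := Finset.sum_congr rfl (fun i _ => key i)

lemma Ppoly_dd_eval_zero (hn : 0 < n) (v : ℝ × ℝ × (Fin n → ℝ)) :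
    ((Ppoly x v ⟨0, hn⟩).derivative.derivative).eval (x 0) = 0 := by
  rw [Ppoly_dd_eval]
  apply Finset.sum_eq_zero
  intro i _
  by_cases hi : i ≤ (⟨0, hn⟩ : Fin n)
  · rw [if_pos hi]
    have : i = ⟨0, hn⟩ := by
      apply Fin.ext
      have := (Fin.le_def.mp hi)
      simpa using this
    subst this
    have e : ((⟨0, hn⟩ : Fin n)).castSucc = (0 : Fin (n+1)) := by
      apply Fin.ext; simp
    rw [e]
    ring
  · rw [if_neg hi]

lemma Ppoly_dd_eval_last (hn : 0 < n) (v : ℝ × ℝ × (Fin n → ℝ))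
    (hnat : ∑ i : Fin n, v.2.2 i * (x (Fin.last n) - x i.castSucc) = 0) :
    ((Ppoly x v ⟨n - 1, by omega⟩).derivative.derivative).eval (x (Fin.last n)) = 0 := by
  rw [Ppoly_dd_eval]
  have hall : ∀ i : Fin n, i ≤ (⟨n - 1, by omega⟩ : Fin n) := by
    intro i
    rw [Fin.le_def]
    have := i.isLt
    simp
    omega
  calc ∑ i : Fin n, (if i ≤ (⟨n - 1, by omega⟩ : Fin n)
          then 6 * v.2.2 i * (x (Fin.last n) - x i.castSucc) else 0)
      = ∑ i : Fin n, 6 * (v.2.2 i * (x (Fin.last n) - x i.castSucc)) := by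
        apply Finset.sum_congr rfl
        intro i _
        rw [if_pos (hall i)]
        ring
    _ = 6 * ∑ i : Fin n, v.2.2 i * (x (Fin.last n) - x i.castSucc) := by
        rw [Finset.mul_sum]
    _ = 0 := by rw [hnat]; ring

end Construction
section LinearAlgebra

variable {n : ℕ}

noncomputable def Lmap (x : Fin (n + 1) → ℝ) :
    (ℝ × ℝ × (Fin n → ℝ)) →ₗ[ℝ] ((Fin (n+1) → ℝ) × ℝ) where
  toFun v := (fun j => Sfun x v (x j),
    ∑ i : Fin n, v.2.2 i * (x (Fin.last n) - x i.castSucc))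
  map_add' v w := by
    refine Prod.ext ?_ ?_
    · funext j
      show Sfun x (v + w) (x j) = Sfun x v (x j) + Sfun x w (x j)
      simp only [Sfun, Prod.fst_add, Prod.snd_add, Pi.add_apply, add_mul,
        Finset.sum_add_distrib]
      ring
    · show ∑ i : Fin n, (v + w).2.2 i * _ = _
      simp only [Prod.snd_add, Pi.add_apply, add_mul, Finset.sum_add_distrib]
  map_smul' a v := by
    refine Prod.ext ?_ ?_
    · funext j
      show Sfun x (a • v) (x j) = a * Sfun x v (x j)
      rw [Sfun, Sfun, mul_add, mul_add, Finset.mul_sum]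
      have h1 : (a • v).1 = a * v.1 := rfl
      have h2 : (a • v).2.1 = a * v.2.1 := rfl
      have h3 : ∀ i, (a • v).2.2 i = a * v.2.2 i := fun i => rfl
      rw [h1, h2]
      congr 1
      · ring
      · apply Finset.sum_congr rfl
        intro i _
        rw [h3]
        ring
    · show ∑ i : Fin n, (a • v).2.2 i * _ = _
      simp only [Prod.smul_snd, Pi.smul_apply, smul_eq_mul, RingHom.id_apply, Prod.smul_fst]
      rw [Finset.mul_sum]
      apply Finset.sum_congr rfl
      intro i _
      ring

lemma Lmap_injective (hn : 0 < n) (x : Fin (n + 1) → ℝ) (hx : StrictMono x) :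
    Function.Injective (Lmap x) := by
  rw [← LinearMap.ker_eq_bot, LinearMap.ker_eq_bot']
  intro v hv
  have hval : ∀ j, Sfun x v (x j) = 0 := by
    intro j
    have := congrFun (congrArg Prod.fst hv) j
    simpa [Lmap] using this
  have hnat : ∑ i : Fin n, v.2.2 i * (x (Fin.last n) - x i.castSucc) = 0 := by
    have := congrArg Prod.snd hv
    simpa [Lmap] using this
  -- the spline vanishes identically on [x 0, x last]
  have hzero : ∀ t ∈ Set.Icc (x 0) (x (Fin.last n)), Sfun x v t = 0 :=
    homog n hn x hx (Sfun x v) ((Sfun_contDiff x v).contDiffOn)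
      (Ppoly x v) (Ppoly_degree x v) (Sfun_eq_Ppoly x hx v) hval
      (Ppoly_dd_eval_zero x hn v) (Ppoly_dd_eval_last x hn v hnat)
  -- hence each piece polynomial is zero
  have hPzero : ∀ j : Fin n, Ppoly x v j = 0 := by
    intro j
    apply Polynomial.eq_zero_of_infinite_isRoot
    apply Set.Infinite.mono (s := Set.Ioo (x j.castSucc) (x j.succ))
    · intro t htt
      have ht : t ∈ Set.Icc (x j.castSucc) (x j.succ) := Set.Ioo_subset_Icc_self htt
      show (Ppoly x v j).IsRoot t
      rw [Polynomial.IsRoot, ← Sfun_eq_Ppoly x hx v j t ht]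
      exact hzero t (sub_Icc x hx j ht)
    · exact Set.infinite_coe_iff.mp (Set.Ioo.infinite (hx (Fin.castSucc_lt_succ (i := j))))
  -- extract coefficients
  obtain ⟨a, b, c⟩ := v
  simp only at hval hnat hPzero ⊢
  -- base piece
  have hP0 : Ppoly x (a, b, c) ⟨0, hn⟩
      = Polynomial.C a + Polynomial.C b * Polynomial.X
        + Polynomial.C (c ⟨0, hn⟩) * (Polynomial.X - Polynomial.C (x 0)) ^ 3 := by
    rw [Ppoly]
    congr 1
    rw [Finset.sum_eq_single (⟨0, hn⟩ : Fin n)]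
    · rw [if_pos le_rfl]
      have e : ((⟨0, hn⟩ : Fin n)).castSucc = (0 : Fin (n+1)) := by
        apply Fin.ext; simp
      rw [e]
    · intro i _ hne
      rw [if_neg]
      intro hle
      apply hne
      apply Fin.ext
      simpa using Fin.le_def.mp hle
    · intro habs
      exact absurd (Finset.mem_univ _) habs
  have heval0 : ∀ t : ℝ, a + b * t + c ⟨0, hn⟩ * (t - x 0) ^ 3 = 0 := by
    intro t
    have h := hPzero ⟨0, hn⟩
    rw [hP0] at h
    have := congrArg (Polynomial.eval t) h
    simpa using this
  have e0 := heval0 (x 0)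
  have e1 := heval0 (x 0 + 1)
  have e2 := heval0 (x 0 - 1)
  have e3 := heval0 (x 0 + 2)
  ring_nf at e0 e1 e2 e3
  have hc0 : c ⟨0, hn⟩ = 0 := by linarith
  have hb : b = 0 := by linarith
  have ha : a = 0 := by
    have h := heval0 (x 0)
    rw [hb, hc0] at h
    simpa using h
  -- successor coefficients
  have hcsucc : ∀ m (hm : m + 1 < n), c ⟨m + 1, hm⟩ = 0 := by
    intro m hm
    have hmn : m < n := by omega
    have hdiff : Ppoly x (a, b, c) ⟨m + 1, hm⟩ - Ppoly x (a, b, c) ⟨m, hmn⟩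
        = Polynomial.C (c ⟨m + 1, hm⟩)
          * (Polynomial.X - Polynomial.C (x ((⟨m + 1, hm⟩ : Fin n)).castSucc)) ^ 3 := by
      rw [Ppoly, Ppoly, add_sub_add_left_eq_sub, ← Finset.sum_sub_distrib]
      rw [Finset.sum_eq_single (⟨m + 1, hm⟩ : Fin n)]
      · rw [if_pos le_rfl, if_neg, sub_zero]
        rw [Fin.le_def]
        simp
      · intro i _ hne
        by_cases hi : i ≤ (⟨m, hmn⟩ : Fin n)
        · rw [if_pos hi, if_pos (hi.trans (by rw [Fin.le_def]; simp)), sub_self]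
        · rw [if_neg hi, if_neg, sub_zero]
          intro hle
          apply hne
          apply Fin.ext
          have h1 := Fin.le_def.mp hle
          have h2 : ¬ (i : ℕ) ≤ m := fun h => hi (by rw [Fin.le_def]; simpa using h)
          simp at h1 ⊢
          omega
      · intro habs
        exact absurd (Finset.mem_univ _) habs
    rw [hPzero, hPzero, sub_zero] at hdiff
    have := congrArg (Polynomial.eval (x ((⟨m + 1, hm⟩ : Fin n)).castSucc + 1)) hdiff.symm
    simpa using this
  refine Prod.ext ha (Prod.ext hb ?_)
  show c = 0
  funext i
  rcases i with ⟨m, hm⟩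
  match m with
  | 0 =>
    show c ⟨0, hm⟩ = (0 : Fin n → ℝ) ⟨0, hm⟩
    simpa using hc0
  | m + 1 =>
    show c ⟨m + 1, hm⟩ = (0 : Fin n → ℝ) ⟨m + 1, hm⟩
    simpa using hcsucc m hm

lemma Lmap_surjective (hn : 0 < n) (x : Fin (n + 1) → ℝ) (hx : StrictMono x) :
    Function.Surjective (Lmap x) := by
  rw [← LinearMap.injective_iff_surjective_of_finrank_eq_finrank (by
    simp [Module.finrank_prod, Module.finrank_pi]; ring)]
  exact Lmap_injective hn x hx

end LinearAlgebra

/-- Existence and uniqueness of the natural cubic spline interpolant: given nodes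
`a = x 0 < x 1 < ⋯ < x n = b` and values `y 0, …, y n`, there is a function
`S : [a,b] → ℝ` which is a natural cubic spline interpolating the data, and it is unique
as a function on `[a,b]`. -/
theorem natural_cubic_spline_existsUnique (n : ℕ) (hn : 0 < n)
    (x : Fin (n + 1) → ℝ) (hx : StrictMono x) (y : Fin (n + 1) → ℝ) :
    (∃ S : ℝ → ℝ, IsNaturalCubicSpline n x y S) ∧
    (∀ S₁ S₂ : ℝ → ℝ, IsNaturalCubicSpline n x y S₁ → IsNaturalCubicSpline n x y S₂ →
      Set.EqOn S₁ S₂ (Set.Icc (x 0) (x (Fin.last n)))) := by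
  have e0 : ((⟨0, hn⟩ : Fin n)).castSucc = (0 : Fin (n+1)) := by
    apply Fin.ext; simp
  have elast : ((⟨n - 1, by omega⟩ : Fin n)).succ = Fin.last n := by
    apply Fin.ext; simp; omega
  have mem0 : x 0 ∈ Set.Icc (x ((⟨0, hn⟩ : Fin n)).castSucc) (x ((⟨0, hn⟩ : Fin n)).succ) := by
    rw [e0]
    exact ⟨le_rfl, (hx (Fin.castSucc_lt_succ (i := ⟨0, hn⟩))).le.trans_eq' (by rw [e0])⟩
  have memlast : x (Fin.last n) ∈ Set.Icc (x ((⟨n - 1, by omega⟩ : Fin n)).castSucc)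
      (x ((⟨n - 1, by omega⟩ : Fin n)).succ) := by
    rw [elast]
    exact ⟨hx.monotone (Fin.le_last _), le_rfl⟩
  constructor
  · -- existence
    obtain ⟨v, hv⟩ := Lmap_surjective hn x hx (y, 0)
    have hval : ∀ j, Sfun x v (x j) = y j := by
      intro j
      have := congrFun (congrArg Prod.fst hv) j
      simpa [Lmap] using this
    have hnat : ∑ i : Fin n, v.2.2 i * (x (Fin.last n) - x i.castSucc) = 0 := by
      have := congrArg Prod.snd hv
      simpa [Lmap] using this
    have hCD : ContDiffOn ℝ 2 (Sfun x v) (Set.Icc (x 0) (x (Fin.last n))) :=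
      (Sfun_contDiff x v).contDiffOn
    have H2 := (spline_derivs n hn x hx (Sfun x v) hCD (Ppoly x v) (Sfun_eq_Ppoly x hx v)).2
    refine ⟨Sfun x v, ?_, hval, hCD, ?_, ?_⟩
    · exact fun i => ⟨Ppoly x v i, Ppoly_degree x v i, Sfun_eq_Ppoly x hx v i⟩
    · rw [H2 ⟨0, hn⟩ (x 0) mem0]
      exact Ppoly_dd_eval_zero x hn v
    · rw [H2 ⟨n - 1, by omega⟩ (x (Fin.last n)) memlast]
      exact Ppoly_dd_eval_last x hn v hnat
  · -- uniqueness
    intro S₁ S₂ h₁ h₂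
    choose p hpdeg hp using h₁.1
    choose q hqdeg hq using h₂.1
    have H₁ := (spline_derivs n hn x hx S₁ h₁.2.2.1 p hp).2
    have H₂ := (spline_derivs n hn x hx S₂ h₂.2.2.1 q hq).2
    have h0p : ((p ⟨0, hn⟩).derivative.derivative).eval (x 0) = 0 := by
      rw [← H₁ ⟨0, hn⟩ (x 0) mem0]
      exact h₁.2.2.2.1
    have h0q : ((q ⟨0, hn⟩).derivative.derivative).eval (x 0) = 0 := by
      rw [← H₂ ⟨0, hn⟩ (x 0) mem0]
      exact h₂.2.2.2.1
    have hNp : ((p ⟨n - 1, by omega⟩).derivative.derivative).eval (x (Fin.last n)) = 0 := by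
      rw [← H₁ ⟨n - 1, by omega⟩ (x (Fin.last n)) memlast]
      exact h₁.2.2.2.2
    have hNq : ((q ⟨n - 1, by omega⟩).derivative.derivative).eval (x (Fin.last n)) = 0 := by
      rw [← H₂ ⟨n - 1, by omega⟩ (x (Fin.last n)) memlast]
      exact h₂.2.2.2.2
    have key := homog n hn x hx (fun t => S₁ t - S₂ t)
      (h₁.2.2.1.sub h₂.2.2.1)
      (fun i => p i - q i)
      (fun i => (Polynomial.degree_sub_le _ _).trans (max_le (hpdeg i) (hqdeg i)))
      (fun i t ht => by show S₁ t - S₂ t = (p i - q i).eval t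
                        rw [hp i t ht, hq i t ht, Polynomial.eval_sub])
      (fun j => by show S₁ (x j) - S₂ (x j) = 0
                   rw [h₁.2.1 j, h₂.2.1 j, sub_self])
      (by rw [Polynomial.derivative_sub, Polynomial.derivative_sub, Polynomial.eval_sub,
        h0p, h0q, sub_zero])
      (by rw [Polynomial.derivative_sub, Polynomial.derivative_sub, Polynomial.eval_sub,
        hNp, hNq, sub_zero])
    intro t ht
    have := key t ht
    simpa [sub_eq_zero] using this
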